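/- For every integer s with 1 ≤ s ≤ p − 1, the trace Tr(L(τ)^s) is the same for all τ ∈ ℂ with τ ≠ 0; equivalently, the power sums Σ_{n=1}^{pm} λ_n(τ)^s of the eigenvalues λ_n(τ) of L(τ) (counted with multiplicity) do not depend on τ. -/

import Mathlib

open Matrix

/-- The Floquet matrix `L(τ)`: block tridiagonal with diagonal blocks `b_j`,
super/sub-diagonal blocks `a_j`, `a_jᵀ`, and corner blocks `τ⁻¹ a_pᵀ`, `τ a_p`. -/
noncomputable def Lmat (m p : ℕ) (a b : ℤ → Matrix (Fin m) (Fin m) ℝ) (τ : ℂ) :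
    Matrix (Fin p × Fin m) (Fin p × Fin m) ℂ :=
  Matrix.of fun q r =>
    (if (q.1 : ℕ) = (r.1 : ℕ) then
        ((b (((q.1 : ℕ) : ℤ) + 1)).map Complex.ofReal) q.2 r.2 else 0) +
    (if (r.1 : ℕ) = (q.1 : ℕ) + 1 then
        ((a (((q.1 : ℕ) : ℤ) + 1)).map Complex.ofReal) q.2 r.2 else 0) +
    (if (q.1 : ℕ) = (r.1 : ℕ) + 1 then
        ((a (((r.1 : ℕ) : ℤ) + 1)).map Complex.ofReal) r.2 q.2 else 0) +
    (if (q.1 : ℕ) = 0 ∧ (r.1 : ℕ) = p - 1 then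
        τ⁻¹ * ((a (p : ℤ)).map Complex.ofReal) r.2 q.2 else 0) +
    (if (q.1 : ℕ) = p - 1 ∧ (r.1 : ℕ) = 0 then
        τ * ((a (p : ℤ)).map Complex.ofReal) q.2 r.2 else 0)

namespace FloqAux

/-- The three `τ`-homogeneous pieces of `Lmat`: tridiagonal part, lower corner, upper corner. -/
noncomputable def G (m p : ℕ) (a b : ℤ → Matrix (Fin m) (Fin m) ℝ) :
    Fin 3 → Matrix (Fin p × Fin m) (Fin p × Fin m) ℂ :=
  ![Matrix.of fun q r =>
      (if (q.1 : ℕ) = (r.1 : ℕ) then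
          ((b (((q.1 : ℕ) : ℤ) + 1)).map Complex.ofReal) q.2 r.2 else 0) +
      (if (r.1 : ℕ) = (q.1 : ℕ) + 1 then
          ((a (((q.1 : ℕ) : ℤ) + 1)).map Complex.ofReal) q.2 r.2 else 0) +
      (if (q.1 : ℕ) = (r.1 : ℕ) + 1 then
          ((a (((r.1 : ℕ) : ℤ) + 1)).map Complex.ofReal) r.2 q.2 else 0),
    Matrix.of fun q r =>
      if (q.1 : ℕ) = p - 1 ∧ (r.1 : ℕ) = 0 then
        ((a (p : ℤ)).map Complex.ofReal) q.2 r.2 else 0,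
    Matrix.of fun q r =>
      if (q.1 : ℕ) = 0 ∧ (r.1 : ℕ) = p - 1 then
        ((a (p : ℤ)).map Complex.ofReal) r.2 q.2 else 0]

/-- `τ`-degree of each piece. -/
def dg : Fin 3 → ℤ := ![0, 1, -1]

/-- Indicator of the tridiagonal (non-corner) piece. -/
def dA : Fin 3 → ℤ := ![1, 0, 0]

@[simp] lemma dg_zero : dg 0 = 0 := rfl
@[simp] lemma dg_one : dg 1 = 1 := rfl
@[simp] lemma dg_two : dg 2 = -1 := rfl
@[simp] lemma dA_zero : dA 0 = 1 := rfl
@[simp] lemma dA_one : dA 1 = 0 := rfl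
@[simp] lemma dA_two : dA 2 = 0 := rfl

def Dsum (l : List (Fin 3)) : ℤ := (l.map dg).sum

def Nsum (l : List (Fin 3)) : ℤ := (l.map dA).sum

@[simp] lemma Dsum_nil : Dsum [] = 0 := rfl
@[simp] lemma Nsum_nil : Nsum [] = 0 := rfl
lemma Dsum_cons (i : Fin 3) (l : List (Fin 3)) : Dsum (i :: l) = dg i + Dsum l := by
  simp [Dsum]
lemma Nsum_cons (i : Fin 3) (l : List (Fin 3)) : Nsum (i :: l) = dA i + Nsum l := by
  simp [Nsum]

lemma fin3_cases (i : Fin 3) : i = 0 ∨ i = 1 ∨ i = 2 :=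
  (by decide : ∀ i : Fin 3, i = 0 ∨ i = 1 ∨ i = 2) i

lemma Lmat_decomp (m p : ℕ) (a b : ℤ → Matrix (Fin m) (Fin m) ℝ) (τ : ℂ) :
    Lmat m p a b τ = ∑ i : Fin 3, τ ^ dg i • G m p a b i := by
  rw [Fin.sum_univ_three]
  ext q r
  simp only [Lmat, G, dg_zero, dg_one, dg_two, Matrix.add_apply, Matrix.smul_apply,
    Matrix.of_apply, Matrix.cons_val_zero, Matrix.cons_val_one, Matrix.head_cons,
    Matrix.cons_val_two, Matrix.tail_cons, smul_eq_mul, zpow_zero, zpow_one,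
    mul_ite, mul_zero, one_mul, mul_add]
  rw [show τ ^ (-1 : ℤ) = τ⁻¹ from zpow_neg_one τ]
  ring

lemma sum_pow_eq {R : Type*} [Semiring R] {ι : Type*} [Fintype ι] [DecidableEq ι]
    (f : ι → R) (s : ℕ) :
    (∑ i, f i) ^ s = ∑ w : Fin s → ι, ((List.ofFn w).map f).prod := by
  induction s with
  | zero => simp
  | succ n ih =>
      rw [pow_succ', ih, Finset.mul_sum, ← Equiv.sum_comp (Fin.consEquiv (fun _ => ι)),
        Fintype.sum_prod_type]
      rw [Finset.sum_comm]
      refine Finset.sum_congr rfl fun w _ => ?_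
      rw [Finset.sum_mul]
      refine Finset.sum_congr rfl fun i _ => ?_
      have hofn : List.ofFn (Fin.consEquiv (fun _ => ι) (i, w)) = i :: List.ofFn w := by
        rw [List.ofFn_succ]
        simp [Fin.consEquiv]
      rw [hofn, List.map_cons, List.prod_cons]

lemma prod_map_smul {ι : Type*} {R : Type*} [CommSemiring R] {A : Type*} [Semiring A]
    [Algebra R A] (c : ι → R) (F : ι → A) (l : List ι) :
    (l.map fun i => c i • F i).prod = (l.map c).prod • (l.map F).prod := by
  induction l with
  | nil => simp
  | cons i l ih =>
      simp only [List.map_cons, List.prod_cons, ih, Algebra.smul_mul_assoc,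
        Algebra.mul_smul_comm, smul_smul]
      rw [mul_comm ((l.map c).prod) (c i)]

lemma prod_map_zpow (τ : ℂ) (hτ : τ ≠ 0) (l : List (Fin 3)) :
    (l.map fun i => τ ^ dg i).prod = τ ^ Dsum l := by
  induction l with
  | nil => simp
  | cons i l ih => simp [ih, Dsum_cons, zpow_add₀ hτ]

lemma bounds (l : List (Fin 3)) :
    Dsum l ≤ (l.length : ℤ) - Nsum l ∧ -((l.length : ℤ)) + Nsum l ≤ Dsum l ∧ 0 ≤ Nsum l := by
  induction l with
  | nil => simp
  | cons i l ih =>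
      obtain ⟨h1, h2, h3⟩ := ih
      rw [Dsum_cons, Nsum_cons, List.length_cons]
      push_cast
      rcases fin3_cases i with rfl | rfl | rfl <;> simp only [dg_zero, dg_one, dg_two,
        dA_zero, dA_one, dA_two] <;> omega

section Support

variable {m p : ℕ} {a b : ℤ → Matrix (Fin m) (Fin m) ℝ}

lemma entry_zero (hp : 3 ≤ p) (l : List (Fin 3)) :
    ∀ (j k : Fin p) (x y : Fin m),
      ¬ (-(Nsum l) ≤ ((k : ℕ) : ℤ) - ((j : ℕ) : ℤ) + ((p : ℤ) - 1) * Dsum l ∧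
          ((k : ℕ) : ℤ) - ((j : ℕ) : ℤ) + ((p : ℤ) - 1) * Dsum l ≤ Nsum l) →
      ((l.map (G m p a b)).prod) (j, x) (k, y) = 0 := by
  induction l with
  | nil =>
      intro j k x y h
      simp only [Dsum_nil, Nsum_nil, mul_zero, add_zero, neg_zero] at h
      have hne : j ≠ k := by
        intro he
        subst he
        exact h ⟨by simp, by simp⟩
      rw [List.map_nil, List.prod_nil]
      exact Matrix.one_apply_ne (fun hc => hne (congrArg Prod.fst hc))
  | cons i l ih =>
      intro j k x y h
      rw [List.map_cons, List.prod_cons, Matrix.mul_apply]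
      apply Finset.sum_eq_zero
      rintro ⟨t, z⟩ -
      rw [Dsum_cons, Nsum_cons] at h
      rcases fin3_cases i with rfl | rfl | rfl
      · -- tridiagonal piece
        simp only [dg_zero, dA_zero, zero_add] at h
        by_cases hs : (j : ℕ) = (t : ℕ) ∨ (t : ℕ) = (j : ℕ) + 1 ∨ (j : ℕ) = (t : ℕ) + 1
        · refine mul_eq_zero_of_right _ (ih t k z y ?_)
          have ht : ((t : ℕ) : ℤ) - ((j : ℕ) : ℤ) = 0 ∨ ((t : ℕ) : ℤ) - ((j : ℕ) : ℤ) = 1 ∨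
              ((t : ℕ) : ℤ) - ((j : ℕ) : ℤ) = -1 := by omega
          rintro ⟨h1, h2⟩
          refine h ⟨?_, ?_⟩ <;> rcases ht with ht | ht | ht <;> linarith
        · refine mul_eq_zero_of_left ?_ _
          push_neg at hs
          show G m p a b 0 (j, x) (t, z) = 0
          simp only [G, Matrix.cons_val_zero, Matrix.of_apply]
          rw [if_neg hs.1, if_neg hs.2.1, if_neg hs.2.2]
          simp
      · -- lower-corner piece `τ a_p`
        simp only [dg_one, dA_one, zero_add] at h
        by_cases hc : (j : ℕ) = p - 1 ∧ (t : ℕ) = 0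
        · refine mul_eq_zero_of_right _ (ih t k z y ?_)
          have hj : ((j : ℕ) : ℤ) = (p : ℤ) - 1 := by omega
          have ht0 : ((t : ℕ) : ℤ) = 0 := by omega
          have heq : ((p : ℤ) - 1) * (1 + Dsum l) =
              ((p : ℤ) - 1) + ((p : ℤ) - 1) * Dsum l := by ring
          rintro ⟨h1, h2⟩
          exact h ⟨by linarith, by linarith⟩
        · refine mul_eq_zero_of_left ?_ _
          show G m p a b 1 (j, x) (t, z) = 0
          simp only [G, Matrix.cons_val_one, Matrix.head_cons, Matrix.of_apply]
          exact if_neg hc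
      · -- upper-corner piece `τ⁻¹ a_pᵀ`
        simp only [dg_two, dA_two, zero_add] at h
        by_cases hc : (j : ℕ) = 0 ∧ (t : ℕ) = p - 1
        · refine mul_eq_zero_of_right _ (ih t k z y ?_)
          have hj : ((j : ℕ) : ℤ) = 0 := by omega
          have ht0 : ((t : ℕ) : ℤ) = (p : ℤ) - 1 := by omega
          have heq : ((p : ℤ) - 1) * (-1 + Dsum l) =
              -((p : ℤ) - 1) + ((p : ℤ) - 1) * Dsum l := by ring
          rintro ⟨h1, h2⟩
          exact h ⟨by linarith, by linarith⟩
        · refine mul_eq_zero_of_left ?_ _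
          show G m p a b 2 (j, x) (t, z) = 0
          simp only [G, Matrix.cons_val_two, Matrix.tail_cons, Matrix.head_cons,
            Matrix.of_apply]
          exact if_neg hc

lemma trace_word_zero (hp : 3 ≤ p) (l : List (Fin 3))
    (hlen : (l.length : ℤ) ≤ (p : ℤ) - 1) (hD : Dsum l ≠ 0) :
    Matrix.trace ((l.map (G m p a b)).prod) = 0 := by
  rw [Matrix.trace]
  apply Finset.sum_eq_zero
  rintro ⟨j, x⟩ -
  show ((l.map (G m p a b)).prod) (j, x) (j, x) = 0
  apply entry_zero hp l j j x x
  obtain ⟨b1, b2, b3⟩ := bounds l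
  rintro ⟨h1, h2⟩
  have hP : (2 : ℤ) ≤ (p : ℤ) - 1 := by
    have : (3 : ℤ) ≤ (p : ℤ) := by exact_mod_cast hp
    linarith
  rcases hD.lt_or_gt with hneg | hpos
  · have hmul : ((p : ℤ) - 1) * Dsum l ≤ ((p : ℤ) - 1) * (-1) :=
      mul_le_mul_of_nonneg_left (by omega) (by linarith)
    linarith
  · have hmul : ((p : ℤ) - 1) * 1 ≤ ((p : ℤ) - 1) * Dsum l :=
      mul_le_mul_of_nonneg_left (by omega) (by linarith)
    linarith

end Support

end FloqAux

/-- For `p ≥ 3` and `1 ≤ s ≤ p - 1`, the power sums `Tr (L(τ)^s)` of the eigenvalues of the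
Floquet matrix do not depend on `τ ≠ 0`. -/
theorem trace_powers_independent_of_tau (m p : ℕ) (hm : 1 ≤ m) (hp : 3 ≤ p)
    (a b : ℤ → Matrix (Fin m) (Fin m) ℝ)
    (hb_sym : ∀ n : ℤ, 1 ≤ n → n ≤ p → (b n)ᵀ = b n)
    (ha_inv : ∀ n : ℤ, 1 ≤ n → n ≤ p → IsUnit (a n).det)
    (s : ℕ) (hs1 : 1 ≤ s) (hs2 : s ≤ p - 1)
    (τ τ' : ℂ) (hτ : τ ≠ 0) (hτ' : τ' ≠ 0) :
    Matrix.trace ((Lmat m p a b τ) ^ s) = Matrix.trace ((Lmat m p a b τ') ^ s) := by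
  classical
  have key : ∀ σ : ℂ, σ ≠ 0 → Matrix.trace ((Lmat m p a b σ) ^ s) =
      ∑ w : Fin s → Fin 3,
        (if FloqAux.Dsum (List.ofFn w) = 0 then
          Matrix.trace (((List.ofFn w).map (FloqAux.G m p a b)).prod) else 0) := by
    intro σ hσ
    rw [FloqAux.Lmat_decomp m p a b σ, FloqAux.sum_pow_eq, Matrix.trace_sum]
    refine Finset.sum_congr rfl fun w _ => ?_
    rw [FloqAux.prod_map_smul, Matrix.trace_smul, FloqAux.prod_map_zpow σ hσ, smul_eq_mul]
    by_cases hD : FloqAux.Dsum (List.ofFn w) = 0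
    · rw [if_pos hD, hD, zpow_zero, one_mul]
    · rw [if_neg hD, FloqAux.trace_word_zero hp _ ?_ hD, mul_zero]
      rw [List.length_ofFn]
      omega
  rw [key τ hτ, key τ' hτ']
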